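/- Let n ≥ 0 be an integer. For every real s > n + 1, one has ∑_p ∑_{m=0}^{n} [ -log(1 - p^{m-s}) ] + s · ∑_p log(p) · ∑_{k≥1} (∑_{j=0}^{n} p^{jk}) p^{-sk} = ∑_{m=0}^{n} [ log ζ(s-m) - s · ζ′(s-m)/ζ(s-m) ], where ζ is the Riemann zeta function; all the series involved converge. In other words, the global Hasse–Weil entropy of projective n-space equals (1 - s·d/ds) log ∏_{m=0}^{n} ζ(s-m). -/

import Mathlib

/-- The Riemann zeta function at real arguments, `ζ(s) = ∑_{n≥1} n^{-s}` for `s > 1`. -/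
noncomputable def zetaR (s : ℝ) : ℝ := ∑' n : ℕ, ((n : ℝ) + 1) ^ (-s)

namespace Stmt4Aux

open Real ArithmeticFunction
open scoped LSeries.notation

lemma prime_one_lt (p : Nat.Primes) : (1 : ℝ) < ((p : ℕ) : ℝ) := by
  exact_mod_cast p.prop.one_lt

lemma prime_pos (p : Nat.Primes) : (0 : ℝ) < ((p : ℕ) : ℝ) :=
  lt_trans one_pos (prime_one_lt p)

lemma x_pos (p : Nat.Primes) (t : ℝ) : 0 < ((p : ℕ) : ℝ) ^ t :=
  Real.rpow_pos_of_pos (prime_pos p) t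

lemma x_lt_one (p : Nat.Primes) {t : ℝ} (ht : t < 0) : ((p : ℕ) : ℝ) ^ t < 1 :=
  Real.rpow_lt_one_of_one_lt_of_neg (prime_one_lt p) ht

lemma tsum_pow_succ {x : ℝ} (h0 : 0 ≤ x) (h1 : x < 1) :
    ∑' k : ℕ, x ^ (k + 1) = x / (1 - x) := by
  rw [div_eq_mul_inv, ← tsum_geometric_of_lt_one h0 h1, ← tsum_mul_left]
  exact tsum_congr fun k => pow_succ' x k

lemma summable_pow_succ {x : ℝ} (h0 : 0 ≤ x) (h1 : x < 1) :
    Summable (fun k : ℕ => x ^ (k + 1)) := by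
  simpa [Function.comp_def] using
    (summable_geometric_of_lt_one h0 h1).comp_injective Nat.succ_injective

lemma riemannZeta_ofReal {u : ℝ} (hu : 1 < u) :
    riemannZeta (u : ℂ) = ((zetaR u : ℝ) : ℂ) := by
  rw [zeta_eq_tsum_one_div_nat_add_one_cpow (by simpa using hu), zetaR, Complex.ofReal_tsum]
  refine (tsum_congr fun n => ?_).symm
  rw [Complex.ofReal_cpow (by positivity : (0:ℝ) ≤ (n:ℝ) + 1)]
  push_cast
  rw [Complex.cpow_neg, one_div]

lemma cpow_eq (p : Nat.Primes) (u : ℝ) :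
    (((p : ℕ) : ℂ)) ^ (-(u : ℂ)) = ((((p : ℕ) : ℝ) ^ (-u) : ℝ) : ℂ) := by
  rw [Complex.ofReal_cpow (prime_pos p).le]
  push_cast
  rfl

lemma summable_primes_rpow {u : ℝ} (hu : 1 < u) :
    Summable (fun p : Nat.Primes => ((p : ℕ) : ℝ) ^ (-u)) := by
  have h := Real.summable_nat_rpow (p := -u) |>.mpr (by linarith)
  exact h.comp_injective Subtype.val_injective

lemma exp_log_zetaR {u : ℝ} (hu : 1 < u) :
    Summable (fun p : Nat.Primes => -Real.log (1 - ((p : ℕ) : ℝ) ^ (-u))) ∧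
    Real.exp (∑' p : Nat.Primes, -Real.log (1 - ((p : ℕ) : ℝ) ^ (-u))) = zetaR u := by
  have hu' : 1 < (u : ℂ).re := by simpa using hu
  have hc : Summable (fun p : Nat.Primes => ((p : ℕ) : ℂ) ^ (-(u : ℂ))) := by
    have := Complex.summable_ofReal.mpr (summable_primes_rpow hu)
    exact this.congr fun p => (cpow_eq p u).symm
  have hlog : Summable (fun p : Nat.Primes => Complex.log (1 - ((p : ℕ) : ℂ) ^ (-(u : ℂ)))) :=
    hc.clog_one_sub
  have hterm : ∀ p : Nat.Primes, -Complex.log (1 - ((p : ℕ) : ℂ) ^ (-(u : ℂ)))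
      = ((-Real.log (1 - ((p : ℕ) : ℝ) ^ (-u)) : ℝ) : ℂ) := by
    intro p
    have h1 : (0:ℝ) ≤ 1 - ((p : ℕ) : ℝ) ^ (-u) := by
      have := x_lt_one p (t := -u) (by linarith)
      linarith
    rw [cpow_eq]
    rw [show (1 : ℂ) - ((((p : ℕ) : ℝ) ^ (-u) : ℝ) : ℂ)
        = (((1 - ((p : ℕ) : ℝ) ^ (-u) : ℝ)) : ℂ) by push_cast; ring]
    rw [← Complex.ofReal_log h1]
    push_cast
    ring
  have hsummR : Summable (fun p : Nat.Primes => -Real.log (1 - ((p : ℕ) : ℝ) ^ (-u))) :=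
    Complex.summable_ofReal.mp (hlog.neg.congr hterm)
  have htsum : (((∑' p : Nat.Primes, -Real.log (1 - ((p : ℕ) : ℝ) ^ (-u))) : ℝ) : ℂ)
      = ∑' p : Nat.Primes, -Complex.log (1 - ((p : ℕ) : ℂ) ^ (-(u : ℂ))) := by
    rw [Complex.ofReal_tsum]
    exact (tsum_congr fun p => (hterm p)).symm
  have hE := riemannZeta_eulerProduct_exp_log hu'
  rw [← htsum, riemannZeta_ofReal hu, ← Complex.ofReal_exp] at hE
  exact ⟨hsummR, by exact_mod_cast hE⟩

lemma zetaR_pos {u : ℝ} (hu : 1 < u) : 0 < zetaR u :=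
  (exp_log_zetaR hu).2 ▸ Real.exp_pos _

lemma tsum_log_eq {u : ℝ} (hu : 1 < u) :
    ∑' p : Nat.Primes, -Real.log (1 - ((p : ℕ) : ℝ) ^ (-u)) = Real.log (zetaR u) := by
  rw [← (exp_log_zetaR hu).2, Real.log_exp]

/-- The von Mangoldt Dirichlet series at real argument. -/
noncomputable def V (u : ℝ) : ℝ := ∑' n : ℕ, Λ n * (n : ℝ) ^ (-u)

lemma term_eq (u : ℝ) (n : ℕ) :
    LSeries.term ↗Λ (u : ℂ) n = ((Λ n * (n : ℝ) ^ (-u) : ℝ) : ℂ) := by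
  rcases eq_or_ne n 0 with rfl | hn
  · simp [LSeries.term_zero]
  · rw [LSeries.term_of_ne_zero hn]
    rw [Complex.ofReal_mul, Complex.ofReal_cpow (Nat.cast_nonneg n)]
    push_cast
    rw [Complex.cpow_neg, div_eq_mul_inv]

lemma summable_V {u : ℝ} (hu : 1 < u) :
    Summable (fun n : ℕ => Λ n * (n : ℝ) ^ (-u)) := by
  have h := ArithmeticFunction.LSeriesSummable_vonMangoldt (s := (u : ℂ)) (by simpa using hu)
  exact Complex.summable_ofReal.mp (h.congr (term_eq u))

lemma ofReal_V (u : ℝ) : ((V u : ℝ) : ℂ) = LSeries ↗Λ (u : ℂ) := by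
  rw [V, Complex.ofReal_tsum, LSeries]
  exact tsum_congr fun n => (term_eq u n).symm

lemma deriv_riemannZeta_ofReal {u : ℝ} (hu : 1 < u) :
    deriv riemannZeta (u : ℂ) = ((-(V u * zetaR u) : ℝ) : ℂ) := by
  have h := ArithmeticFunction.LSeries_vonMangoldt_eq_deriv_riemannZeta_div
    (s := (u : ℂ)) (by simpa using hu)
  rw [← ofReal_V u, riemannZeta_ofReal hu] at h
  have hz : ((zetaR u : ℝ) : ℂ) ≠ 0 := by
    exact_mod_cast (zetaR_pos hu).ne'
  have h2 : -deriv riemannZeta (u : ℂ) = ((V u : ℝ) : ℂ) * ((zetaR u : ℝ) : ℂ) :=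
    (div_eq_iff hz).mp h.symm
  push_cast
  linear_combination -h2

lemma hasDerivAt_zetaR {u : ℝ} (hu : 1 < u) :
    HasDerivAt zetaR (-(V u * zetaR u)) u := by
  have hne : (u : ℂ) ≠ 1 := by
    simp only [ne_eq, Complex.ofReal_eq_one]
    intro h; rw [h] at hu; exact lt_irrefl 1 hu
  have hd := (differentiableAt_riemannZeta hne).hasDerivAt
  have h1 : HasDerivAt (fun x : ℝ => (riemannZeta (x : ℂ)).re)
      (deriv riemannZeta (u : ℂ)).re u := hd.real_of_complex
  rw [deriv_riemannZeta_ofReal hu, Complex.ofReal_re] at h1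
  refine h1.congr_of_eventuallyEq ?_
  filter_upwards [eventually_gt_nhds hu] with x hx
  rw [riemannZeta_ofReal hx, Complex.ofReal_re]

lemma deriv_zetaR {u : ℝ} (hu : 1 < u) : deriv zetaR u = -(V u * zetaR u) :=
  (hasDerivAt_zetaR hu).deriv

lemma vonMangoldt_pow_rpow (p : Nat.Primes) (u : ℝ) (k : ℕ) :
    Λ ((p : ℕ) ^ (k + 1)) * ((((p : ℕ) ^ (k + 1) : ℕ)) : ℝ) ^ (-u)
      = Real.log ((p : ℕ) : ℝ) * (((p : ℕ) : ℝ) ^ (-u)) ^ (k + 1) := by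
  rw [ArithmeticFunction.vonMangoldt_apply_pow (Nat.succ_ne_zero k),
    ArithmeticFunction.vonMangoldt_apply_prime p.prop]
  congr 1
  push_cast
  rw [← Real.rpow_natCast (((p : ℕ) : ℝ)) (k + 1), ← Real.rpow_mul (prime_pos p).le,
    ← Real.rpow_natCast ((((p : ℕ) : ℝ)) ^ (-u)) (k + 1), ← Real.rpow_mul (prime_pos p).le]
  congr 1
  push_cast
  ring

lemma tsum_primePow (p : Nat.Primes) {u : ℝ} (hu : 1 < u) :
    ∑' k : ℕ, Λ ((p : ℕ) ^ (k + 1)) * ((((p : ℕ) ^ (k + 1) : ℕ)) : ℝ) ^ (-u)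
      = Real.log ((p : ℕ) : ℝ) * (((p : ℕ) : ℝ) ^ (-u) / (1 - ((p : ℕ) : ℝ) ^ (-u))) := by
  have hx0 := (x_pos p (-u)).le
  have hx1 := x_lt_one p (t := -u) (by linarith)
  rw [tsum_congr (vonMangoldt_pow_rpow p u), tsum_mul_left, tsum_pow_succ hx0 hx1]

lemma support_subset (u : ℝ) :
    Function.support (fun n : ℕ => Λ n * (n : ℝ) ^ (-u)) ⊆ {n | IsPrimePow n} := by
  intro n hn
  exact ArithmeticFunction.vonMangoldt_ne_zero_iff.mp (left_ne_zero_of_mul hn)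

lemma pair_summable {u : ℝ} (hu : 1 < u) :
    Summable (fun pk : Nat.Primes × ℕ =>
      Λ ((pk.1 : ℕ) ^ (pk.2 + 1)) * ((((pk.1 : ℕ) ^ (pk.2 + 1) : ℕ)) : ℝ) ^ (-u)) := by
  refine Nat.Primes.prodNatEquiv.symm.summable_iff.mp ?_
  have h := (summable_V hu).subtype {n | IsPrimePow n}
  simp only [← Nat.Primes.coe_prodNatEquiv_apply, Prod.eta, Function.comp_def,
    Equiv.apply_symm_apply] at h ⊢
  exact h

lemma summable_W {u : ℝ} (hu : 1 < u) :
    Summable (fun p : Nat.Primes =>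
      Real.log ((p : ℕ) : ℝ) * (((p : ℕ) : ℝ) ^ (-u) / (1 - ((p : ℕ) : ℝ) ^ (-u)))) :=
  (pair_summable hu).prod.congr fun p => tsum_primePow p hu

lemma V_eq {u : ℝ} (hu : 1 < u) :
    V u = ∑' p : Nat.Primes,
      Real.log ((p : ℕ) : ℝ) * (((p : ℕ) : ℝ) ^ (-u) / (1 - ((p : ℕ) : ℝ) ^ (-u))) := by
  rw [V, tsum_eq_tsum_primes_of_support_subset_prime_powers (summable_V hu) (support_subset u)]
  exact tsum_congr fun p => tsum_primePow p hu

end Stmt4Aux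

open Stmt4Aux in
/-- the global Hasse–Weil entropy of projective `n`-space equals
`(1 - s·d/ds) log ∏_{m=0}^{n} ζ(s-m)`. -/
theorem stmt_4 (n : ℕ) (s : ℝ) (hs : (n : ℝ) + 1 < s) :
    (∀ p : Nat.Primes, Summable (fun k : ℕ =>
      (∑ j ∈ Finset.range (n + 1), ((p : ℕ) : ℝ) ^ (j * (k + 1)))
        * ((p : ℕ) : ℝ) ^ (-s * ((k : ℝ) + 1)))) ∧
    Summable (fun p : Nat.Primes =>
      ∑ m ∈ Finset.range (n + 1), -Real.log (1 - ((p : ℕ) : ℝ) ^ ((m : ℝ) - s))) ∧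
    Summable (fun p : Nat.Primes =>
      Real.log ((p : ℕ) : ℝ) * ∑' k : ℕ,
        (∑ j ∈ Finset.range (n + 1), ((p : ℕ) : ℝ) ^ (j * (k + 1)))
          * ((p : ℕ) : ℝ) ^ (-s * ((k : ℝ) + 1))) ∧
    (∑' p : Nat.Primes,
        ∑ m ∈ Finset.range (n + 1), -Real.log (1 - ((p : ℕ) : ℝ) ^ ((m : ℝ) - s)))
      + s * ∑' p : Nat.Primes,
          Real.log ((p : ℕ) : ℝ) * ∑' k : ℕ,
            (∑ j ∈ Finset.range (n + 1), ((p : ℕ) : ℝ) ^ (j * (k + 1)))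
              * ((p : ℕ) : ℝ) ^ (-s * ((k : ℝ) + 1))
      = ∑ m ∈ Finset.range (n + 1),
          (Real.log (zetaR (s - m)) - s * deriv zetaR (s - m) / zetaR (s - m)) := by
  -- basic bounds
  have hmem : ∀ m ∈ Finset.range (n + 1), 1 < s - (m : ℝ) := by
    intro m hm
    have : (m : ℝ) ≤ (n : ℝ) := by exact_mod_cast Nat.lt_succ_iff.mp (Finset.mem_range.mp hm)
    linarith
  have hneg : ∀ m ∈ Finset.range (n + 1), (m : ℝ) - s < 0 := by
    intro m hm; have := hmem m hm; linarith
  -- rewriting the k-summand as a finite sum of geometric terms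
  have term_eq_sum : ∀ (p : Nat.Primes) (k : ℕ),
      (∑ j ∈ Finset.range (n + 1), ((p : ℕ) : ℝ) ^ (j * (k + 1)))
        * ((p : ℕ) : ℝ) ^ (-s * ((k : ℝ) + 1))
      = ∑ j ∈ Finset.range (n + 1), (((p : ℕ) : ℝ) ^ ((j : ℝ) - s)) ^ (k + 1) := by
    intro p k
    rw [Finset.sum_mul]
    refine Finset.sum_congr rfl fun j hj => ?_
    rw [← Real.rpow_natCast (((p : ℕ) : ℝ) ^ ((j : ℝ) - s)) (k + 1),
      ← Real.rpow_mul (prime_pos p).le,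
      ← Real.rpow_natCast ((p : ℕ) : ℝ) (j * (k + 1)),
      ← Real.rpow_add (prime_pos p)]
    congr 1
    push_cast
    ring
  -- per-prime summability of the geometric form
  have summable_geom : ∀ (p : Nat.Primes),
      Summable (fun k : ℕ =>
        ∑ j ∈ Finset.range (n + 1), (((p : ℕ) : ℝ) ^ ((j : ℝ) - s)) ^ (k + 1)) := by
    intro p
    refine summable_sum fun j hj => ?_
    exact summable_pow_succ (x_pos p _).le (x_lt_one p (hneg j hj))
  -- the inner tsum evaluated
  have inner_eq : ∀ (p : Nat.Primes),
      (∑' k : ℕ, (∑ j ∈ Finset.range (n + 1), ((p : ℕ) : ℝ) ^ (j * (k + 1)))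
          * ((p : ℕ) : ℝ) ^ (-s * ((k : ℝ) + 1)))
      = ∑ j ∈ Finset.range (n + 1),
          ((p : ℕ) : ℝ) ^ ((j : ℝ) - s) / (1 - ((p : ℕ) : ℝ) ^ ((j : ℝ) - s)) := by
    intro p
    rw [tsum_congr (term_eq_sum p),
      Summable.tsum_finsetSum (fun j hj => summable_pow_succ (x_pos p _).le (x_lt_one p (hneg j hj)))]
    exact Finset.sum_congr rfl fun j hj =>
      tsum_pow_succ (x_pos p _).le (x_lt_one p (hneg j hj))
  have hexp : ∀ m : ℕ, -(s - (m : ℝ)) = (m : ℝ) - s := fun m => neg_sub s (m : ℝ)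
  -- the second summand over primes, rewritten as a finite sum of von Mangoldt pieces
  have key : ∀ p : Nat.Primes,
      (∑ m ∈ Finset.range (n + 1), Real.log ((p : ℕ) : ℝ) *
        (((p : ℕ) : ℝ) ^ (-(s - (m : ℝ))) / (1 - ((p : ℕ) : ℝ) ^ (-(s - (m : ℝ))))))
      = Real.log ((p : ℕ) : ℝ) * ∑' k : ℕ,
          (∑ j ∈ Finset.range (n + 1), ((p : ℕ) : ℝ) ^ (j * (k + 1)))
            * ((p : ℕ) : ℝ) ^ (-s * ((k : ℝ) + 1)) := by
    intro p
    rw [inner_eq p, Finset.mul_sum]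
    refine Finset.sum_congr rfl fun m hm => ?_
    rw [hexp m]
  refine ⟨?_, ?_, ?_, ?_⟩
  · intro p
    exact (summable_geom p).congr fun k => (term_eq_sum p k).symm
  · refine summable_sum fun m hm => ?_
    refine ((exp_log_zetaR (hmem m hm)).1).congr fun p => ?_
    rw [hexp m]
  · exact (summable_sum fun m hm => summable_W (hmem m hm)).congr key
  · have e1 : (∑' p : Nat.Primes,
        ∑ m ∈ Finset.range (n + 1), -Real.log (1 - ((p : ℕ) : ℝ) ^ ((m : ℝ) - s)))
        = ∑ m ∈ Finset.range (n + 1), Real.log (zetaR (s - (m : ℝ))) := by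
      rw [Summable.tsum_finsetSum (fun m hm => ((exp_log_zetaR (hmem m hm)).1).congr fun p => by rw [hexp m])]
      refine Finset.sum_congr rfl fun m hm => ?_
      rw [← tsum_log_eq (hmem m hm)]
      exact tsum_congr fun p => by rw [hexp m]
    have e2 : (∑' p : Nat.Primes,
        Real.log ((p : ℕ) : ℝ) * ∑' k : ℕ,
          (∑ j ∈ Finset.range (n + 1), ((p : ℕ) : ℝ) ^ (j * (k + 1)))
            * ((p : ℕ) : ℝ) ^ (-s * ((k : ℝ) + 1)))
        = ∑ m ∈ Finset.range (n + 1), V (s - (m : ℝ)) := by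
      rw [← tsum_congr key, Summable.tsum_finsetSum (fun m hm => by
        refine (summable_W (hmem m hm)).congr fun p => rfl)]
      refine Finset.sum_congr rfl fun m hm => ?_
      rw [V_eq (hmem m hm)]
    rw [e1, e2, Finset.mul_sum, ← Finset.sum_add_distrib]
    refine Finset.sum_congr rfl fun m hm => ?_
    have hu := hmem m hm
    rw [deriv_zetaR hu]
    have hz := (zetaR_pos hu).ne'
    field_simp
    ring
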